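/- Let v ≥ 1 be an integer and let Ω = (ω_{ij}), Δ = (δ_{ij}), Θ = (θ_{ij}) be v×v real matrices each of whose rows and columns sum to zero. For indices i, i′, j, j′ ∈ {1,…,v} set Q(i,i′,j,j′) = ω_{ii} + ω_{i′i′} − 2ω_{ii′} + δ_{jj} + δ_{j′j′} − 2δ_{jj′} + 2(θ_{ij} − θ_{ij′} − θ_{i′j} + θ_{i′j′}). Then the sum of Q(i,i′,j,j′) over all quadruples (i,i′,j,j′) with i ≠ j, i ≠ i′, i′ ≠ j′, and j ≠ j′ equals 2v·[((v−1) + (v−2)²)·(tr Ω + tr Δ) − 2(v−1)·tr Θ]. -/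
import Mathlib


open Matrix Finset

lemma sum_ne_one {n : ℕ} (f : Fin n → ℝ) (a : Fin n) :
    ∑ x, (if x = a then (0:ℝ) else f x) = (∑ x, f x) - f a := by
  have h : ∀ x, (if x = a then (0:ℝ) else f x)
      = f x - (if x = a then f x else 0) := by
    intro x; by_cases h : x = a <;> simp [h]
  rw [Finset.sum_congr rfl fun x _ => h x, Finset.sum_sub_distrib,
    Finset.sum_ite_eq' Finset.univ a f]
  simp

lemma sum_ne_two {n : ℕ} (f : Fin n → ℝ) (a b : Fin n) :
    ∑ x, (if x = a then (0:ℝ) else if x = b then 0 else f x)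
      = (∑ x, f x) - f a - f b + (if a = b then f b else 0) := by
  by_cases hab : a = b
  · subst hab
    have h : ∀ x, (if x = a then (0:ℝ) else if x = a then 0 else f x)
        = if x = a then 0 else f x := by
      intro x; by_cases h : x = a <;> simp [h]
    rw [Finset.sum_congr rfl fun x _ => h x, sum_ne_one]
    simp
  · have h : ∀ x, (if x = a then (0:ℝ) else if x = b then 0 else f x)
        = f x - (if x = a then f x else 0) - (if x = b then f x else 0) := by
      intro x
      by_cases h1 : x = a
      · subst h1; simp [hab]
      · by_cases h2 : x = b
        · subst h2; simp [h1, Ne.symm hab]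
        · simp [h1, h2]
    rw [Finset.sum_congr rfl fun x _ => h x]
    rw [Finset.sum_sub_distrib, Finset.sum_sub_distrib,
      Finset.sum_ite_eq' Finset.univ a f, Finset.sum_ite_eq' Finset.univ b f]
    simp [hab]

/-- The variance functional identity (5.2): summing
`Q(i,i',j,j') = ω_{ii} + ω_{i'i'} - 2ω_{ii'} + δ_{jj} + δ_{j'j'} - 2δ_{jj'}
+ 2(θ_{ij} - θ_{ij'} - θ_{i'j} + θ_{i'j'})` over all quadruples with
`i ≠ j, i ≠ i', i' ≠ j', j ≠ j'` gives
`2v[((v-1) + (v-2)²)(tr Ω + tr Δ) - 2(v-1) tr Θ]`, provided each of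
`Ω, Δ, Θ` has all row and column sums zero. -/
theorem variance_functional_identity
    (v : ℕ) (hv : 1 ≤ v)
    (Ω Δ Θ : Matrix (Fin v) (Fin v) ℝ)
    (hΩr : ∀ i, ∑ j, Ω i j = 0) (hΩc : ∀ j, ∑ i, Ω i j = 0)
    (hΔr : ∀ i, ∑ j, Δ i j = 0) (hΔc : ∀ j, ∑ i, Δ i j = 0)
    (hΘr : ∀ i, ∑ j, Θ i j = 0) (hΘc : ∀ j, ∑ i, Θ i j = 0) :
    (∑ i : Fin v, ∑ i' : Fin v, ∑ j : Fin v, ∑ j' : Fin v,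
      if i ≠ j ∧ i ≠ i' ∧ i' ≠ j' ∧ j ≠ j' then
        Ω i i + Ω i' i' - 2 * Ω i i' + Δ j j + Δ j' j' - 2 * Δ j j'
          + 2 * (Θ i j - Θ i j' - Θ i' j + Θ i' j')
      else 0) =
    2 * (v : ℝ) * ((((v : ℝ) - 1) + ((v : ℝ) - 2) ^ 2) * (Ω.trace + Δ.trace)
      - 2 * ((v : ℝ) - 1) * Θ.trace) := by
  have trΩ : ∑ x : Fin v, Ω x x = Ω.trace := rfl
  have trΔ : ∑ x : Fin v, Δ x x = Δ.trace := rfl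
  have trΘ : ∑ x : Fin v, Θ x x = Θ.trace := rfl
  -- Step A: sum over j'
  have stepA : ∀ i i' j : Fin v,
      (∑ j' : Fin v, if i ≠ j ∧ i ≠ i' ∧ i' ≠ j' ∧ j ≠ j' then
          Ω i i + Ω i' i' - 2 * Ω i i' + Δ j j + Δ j' j' - 2 * Δ j j'
            + 2 * (Θ i j - Θ i j' - Θ i' j + Θ i' j') else 0)
      = if i ≠ j ∧ i ≠ i' then
          ((v:ℝ) * (Ω i i + Ω i' i' - 2 * Ω i i' + Δ j j) + Δ.trace
            + 2 * (v:ℝ) * (Θ i j - Θ i' j)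
          - (Ω i i + Ω i' i' - 2 * Ω i i' + Δ j j + Δ i' i' - 2 * Δ j i'
              + 2 * (Θ i j - Θ i i' - Θ i' j + Θ i' i'))
          - (Ω i i + Ω i' i' - 2 * Ω i i')
          + (if i' = j then Ω i i + Ω i' i' - 2 * Ω i i' else 0)) else 0 := by
    intro i i' j
    by_cases h : i ≠ j ∧ i ≠ i'
    · rw [if_pos h]
      have hrw : ∀ j' : Fin v,
          (if i ≠ j ∧ i ≠ i' ∧ i' ≠ j' ∧ j ≠ j' then
            Ω i i + Ω i' i' - 2 * Ω i i' + Δ j j + Δ j' j' - 2 * Δ j j'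
              + 2 * (Θ i j - Θ i j' - Θ i' j + Θ i' j') else 0)
          = if j' = i' then 0 else if j' = j then 0 else
            Ω i i + Ω i' i' - 2 * Ω i i' + Δ j j + Δ j' j' - 2 * Δ j j'
              + 2 * (Θ i j - Θ i j' - Θ i' j + Θ i' j') := by
        intro j'
        by_cases h1 : j' = i'
        · subst h1; simp [h.1, h.2]
        · by_cases h2 : j' = j
          · subst h2; simp [h1]
          · simp [h.1, h.2, h1, h2, Ne.symm h1, Ne.symm h2]
      rw [Finset.sum_congr rfl fun j' _ => hrw j',
        sum_ne_two (fun j' => Ω i i + Ω i' i' - 2 * Ω i i' + Δ j j + Δ j' j'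
          - 2 * Δ j j' + 2 * (Θ i j - Θ i j' - Θ i' j + Θ i' j')) i' j]
      have hsum : (∑ j' : Fin v, (Ω i i + Ω i' i' - 2 * Ω i i' + Δ j j + Δ j' j'
            - 2 * Δ j j' + 2 * (Θ i j - Θ i j' - Θ i' j + Θ i' j')))
          = (v:ℝ) * (Ω i i + Ω i' i' - 2 * Ω i i' + Δ j j) + Δ.trace
            + 2 * (v:ℝ) * (Θ i j - Θ i' j) := by
        rw [Finset.sum_congr rfl (fun j' _ => by ring :
          ∀ j' ∈ Finset.univ, Ω i i + Ω i' i' - 2 * Ω i i' + Δ j j + Δ j' j'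
            - 2 * Δ j j' + 2 * (Θ i j - Θ i j' - Θ i' j + Θ i' j')
          = ((Ω i i + Ω i' i' - 2 * Ω i i' + Δ j j + 2 * Θ i j - 2 * Θ i' j)
            + Δ j' j' - 2 * Δ j j' - 2 * Θ i j' + 2 * Θ i' j'))]
        simp only [Finset.sum_add_distrib, Finset.sum_sub_distrib,
          ← Finset.mul_sum, Finset.sum_const, Finset.card_univ,
          Fintype.card_fin, nsmul_eq_mul, hΔr, hΘr, trΔ]
        ring
      rw [hsum]
      have hite : (if i' = j then (Ω i i + Ω i' i' - 2 * Ω i i' + Δ j j + Δ j j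
            - 2 * Δ j j + 2 * (Θ i j - Θ i j - Θ i' j + Θ i' j)) else 0)
          = (if i' = j then Ω i i + Ω i' i' - 2 * Ω i i' else 0) := by
        by_cases hij : i' = j
        · rw [if_pos hij, if_pos hij]; ring
        · rw [if_neg hij, if_neg hij]
      rw [hite]; ring
    · rw [if_neg h]
      refine Finset.sum_eq_zero fun j' _ => if_neg ?_
      tauto
  -- Step B: sum over j
  have stepB : ∀ i i' : Fin v,
      (∑ j : Fin v, if i ≠ j ∧ i ≠ i' then
          ((v:ℝ) * (Ω i i + Ω i' i' - 2 * Ω i i' + Δ j j) + Δ.trace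
            + 2 * (v:ℝ) * (Θ i j - Θ i' j)
          - (Ω i i + Ω i' i' - 2 * Ω i i' + Δ j j + Δ i' i' - 2 * Δ j i'
              + 2 * (Θ i j - Θ i i' - Θ i' j + Θ i' i'))
          - (Ω i i + Ω i' i' - 2 * Ω i i')
          + (if i' = j then Ω i i + Ω i' i' - 2 * Ω i i' else 0)) else 0)
      = if i ≠ i' then
          (((v:ℝ)^2 - 3*(v:ℝ) + 3) * (Ω i i + Ω i' i' - 2 * Ω i i')
            + (2*(v:ℝ) - 2) * Δ.trace - ((v:ℝ) - 1) * (Δ i i + Δ i' i')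
            - 2 * Δ i i'
            + (2*(v:ℝ) - 2) * (Θ i i' + Θ i' i - Θ i i - Θ i' i')) else 0 := by
    intro i i'
    by_cases h : i ≠ i'
    · rw [if_pos h]
      have hrw : ∀ j : Fin v,
          (if i ≠ j ∧ i ≠ i' then
            ((v:ℝ) * (Ω i i + Ω i' i' - 2 * Ω i i' + Δ j j) + Δ.trace
              + 2 * (v:ℝ) * (Θ i j - Θ i' j)
            - (Ω i i + Ω i' i' - 2 * Ω i i' + Δ j j + Δ i' i' - 2 * Δ j i'
                + 2 * (Θ i j - Θ i i' - Θ i' j + Θ i' i'))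
            - (Ω i i + Ω i' i' - 2 * Ω i i')
            + (if i' = j then Ω i i + Ω i' i' - 2 * Ω i i' else 0)) else 0)
          = if j = i then 0 else
            ((v:ℝ) * (Ω i i + Ω i' i' - 2 * Ω i i' + Δ j j) + Δ.trace
              + 2 * (v:ℝ) * (Θ i j - Θ i' j)
            - (Ω i i + Ω i' i' - 2 * Ω i i' + Δ j j + Δ i' i' - 2 * Δ j i'
                + 2 * (Θ i j - Θ i i' - Θ i' j + Θ i' i'))
            - (Ω i i + Ω i' i' - 2 * Ω i i')
            + (if i' = j then Ω i i + Ω i' i' - 2 * Ω i i' else 0)) := by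
        intro j
        by_cases hj : j = i
        · subst hj; simp
        · simp [h, hj, Ne.symm hj]
      rw [Finset.sum_congr rfl fun j _ => hrw j,
        sum_ne_one (fun j =>
          ((v:ℝ) * (Ω i i + Ω i' i' - 2 * Ω i i' + Δ j j) + Δ.trace
            + 2 * (v:ℝ) * (Θ i j - Θ i' j)
          - (Ω i i + Ω i' i' - 2 * Ω i i' + Δ j j + Δ i' i' - 2 * Δ j i'
              + 2 * (Θ i j - Θ i i' - Θ i' j + Θ i' i'))
          - (Ω i i + Ω i' i' - 2 * Ω i i')
          + (if i' = j then Ω i i + Ω i' i' - 2 * Ω i i' else 0))) i]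
      have hsum : (∑ j : Fin v,
          ((v:ℝ) * (Ω i i + Ω i' i' - 2 * Ω i i' + Δ j j) + Δ.trace
            + 2 * (v:ℝ) * (Θ i j - Θ i' j)
          - (Ω i i + Ω i' i' - 2 * Ω i i' + Δ j j + Δ i' i' - 2 * Δ j i'
              + 2 * (Θ i j - Θ i i' - Θ i' j + Θ i' i'))
          - (Ω i i + Ω i' i' - 2 * Ω i i')
          + (if i' = j then Ω i i + Ω i' i' - 2 * Ω i i' else 0)))
          = (v:ℝ) * ((v:ℝ) * (Ω i i + Ω i' i' - 2 * Ω i i') + Δ.trace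
              - 2 * (Ω i i + Ω i' i' - 2 * Ω i i') - Δ i' i'
              + 2 * Θ i i' - 2 * Θ i' i')
            + ((v:ℝ) - 1) * Δ.trace
            + (Ω i i + Ω i' i' - 2 * Ω i i') := by
        rw [Finset.sum_congr rfl (fun j _ => by ring :
          ∀ j ∈ Finset.univ,
            ((v:ℝ) * (Ω i i + Ω i' i' - 2 * Ω i i' + Δ j j) + Δ.trace
              + 2 * (v:ℝ) * (Θ i j - Θ i' j)
            - (Ω i i + Ω i' i' - 2 * Ω i i' + Δ j j + Δ i' i' - 2 * Δ j i'
                + 2 * (Θ i j - Θ i i' - Θ i' j + Θ i' i'))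
            - (Ω i i + Ω i' i' - 2 * Ω i i')
            + (if i' = j then Ω i i + Ω i' i' - 2 * Ω i i' else 0))
          = (((v:ℝ) * (Ω i i + Ω i' i' - 2 * Ω i i') + Δ.trace
              - 2 * (Ω i i + Ω i' i' - 2 * Ω i i') - Δ i' i'
              + 2 * Θ i i' - 2 * Θ i' i')
            + ((v:ℝ) - 1) * Δ j j + (2*(v:ℝ) - 2) * Θ i j
            - (2*(v:ℝ) - 2) * Θ i' j + 2 * Δ j i'
            + (if i' = j then Ω i i + Ω i' i' - 2 * Ω i i' else 0)))]
        simp only [Finset.sum_add_distrib, Finset.sum_sub_distrib,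
          ← Finset.mul_sum, Finset.sum_const, Finset.card_univ,
          Fintype.card_fin, nsmul_eq_mul, hΘr, hΔc, trΔ,
          Finset.sum_ite_eq, Finset.mem_univ, if_true]
        ring
      rw [hsum, if_neg (fun hh : i' = i => h hh.symm)]
      ring
    · rw [if_neg h]
      refine Finset.sum_eq_zero fun j _ => if_neg ?_
      tauto
  -- Step C: sum over i'
  have stepC : ∀ i : Fin v,
      (∑ i' : Fin v, if i ≠ i' then
          (((v:ℝ)^2 - 3*(v:ℝ) + 3) * (Ω i i + Ω i' i' - 2 * Ω i i')
            + (2*(v:ℝ) - 2) * Δ.trace - ((v:ℝ) - 1) * (Δ i i + Δ i' i')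
            - 2 * Δ i i'
            + (2*(v:ℝ) - 2) * (Θ i i' + Θ i' i - Θ i i - Θ i' i')) else 0)
      = ((v:ℝ)^2 - 3*(v:ℝ) + 3) * ((v:ℝ) * Ω i i + Ω.trace)
          + (v:ℝ) * ((2*(v:ℝ) - 2) * Δ.trace - ((v:ℝ) - 1) * Δ i i)
          - ((v:ℝ) - 1) * Δ.trace
          - (2*(v:ℝ) - 2) * ((v:ℝ) * Θ i i + Θ.trace)
          - (2*(v:ℝ) - 2) * Δ.trace + 2 * (v:ℝ) * Δ i i := by
    intro i
    have hrw : ∀ i' : Fin v,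
        (if i ≠ i' then
          (((v:ℝ)^2 - 3*(v:ℝ) + 3) * (Ω i i + Ω i' i' - 2 * Ω i i')
            + (2*(v:ℝ) - 2) * Δ.trace - ((v:ℝ) - 1) * (Δ i i + Δ i' i')
            - 2 * Δ i i'
            + (2*(v:ℝ) - 2) * (Θ i i' + Θ i' i - Θ i i - Θ i' i')) else 0)
        = if i' = i then 0 else
          (((v:ℝ)^2 - 3*(v:ℝ) + 3) * (Ω i i + Ω i' i' - 2 * Ω i i')
            + (2*(v:ℝ) - 2) * Δ.trace - ((v:ℝ) - 1) * (Δ i i + Δ i' i')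
            - 2 * Δ i i'
            + (2*(v:ℝ) - 2) * (Θ i i' + Θ i' i - Θ i i - Θ i' i')) := by
      intro i'
      by_cases hii : i' = i
      · subst hii; simp
      · simp [Ne.symm hii, hii]
    rw [Finset.sum_congr rfl fun i' _ => hrw i',
      sum_ne_one (fun i' =>
        (((v:ℝ)^2 - 3*(v:ℝ) + 3) * (Ω i i + Ω i' i' - 2 * Ω i i')
          + (2*(v:ℝ) - 2) * Δ.trace - ((v:ℝ) - 1) * (Δ i i + Δ i' i')
          - 2 * Δ i i'
          + (2*(v:ℝ) - 2) * (Θ i i' + Θ i' i - Θ i i - Θ i' i'))) i]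
    have hsum : (∑ i' : Fin v,
        (((v:ℝ)^2 - 3*(v:ℝ) + 3) * (Ω i i + Ω i' i' - 2 * Ω i i')
          + (2*(v:ℝ) - 2) * Δ.trace - ((v:ℝ) - 1) * (Δ i i + Δ i' i')
          - 2 * Δ i i'
          + (2*(v:ℝ) - 2) * (Θ i i' + Θ i' i - Θ i i - Θ i' i')))
        = ((v:ℝ)^2 - 3*(v:ℝ) + 3) * ((v:ℝ) * Ω i i + Ω.trace)
          + (v:ℝ) * ((2*(v:ℝ) - 2) * Δ.trace - ((v:ℝ) - 1) * Δ i i)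
          - ((v:ℝ) - 1) * Δ.trace
          - (2*(v:ℝ) - 2) * ((v:ℝ) * Θ i i + Θ.trace) := by
      rw [Finset.sum_congr rfl (fun i' _ => by ring :
        ∀ i' ∈ Finset.univ,
          (((v:ℝ)^2 - 3*(v:ℝ) + 3) * (Ω i i + Ω i' i' - 2 * Ω i i')
            + (2*(v:ℝ) - 2) * Δ.trace - ((v:ℝ) - 1) * (Δ i i + Δ i' i')
            - 2 * Δ i i'
            + (2*(v:ℝ) - 2) * (Θ i i' + Θ i' i - Θ i i - Θ i' i'))
        = ((((v:ℝ)^2 - 3*(v:ℝ) + 3) * Ω i i + (2*(v:ℝ) - 2) * Δ.trace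
              - ((v:ℝ) - 1) * Δ i i - (2*(v:ℝ) - 2) * Θ i i)
            + ((v:ℝ)^2 - 3*(v:ℝ) + 3) * Ω i' i'
            - (2*((v:ℝ)^2 - 3*(v:ℝ) + 3)) * Ω i i'
            - ((v:ℝ) - 1) * Δ i' i' - 2 * Δ i i'
            + (2*(v:ℝ) - 2) * Θ i i' + (2*(v:ℝ) - 2) * Θ i' i
            - (2*(v:ℝ) - 2) * Θ i' i'))]
      simp only [Finset.sum_add_distrib, Finset.sum_sub_distrib,
        ← Finset.mul_sum, Finset.sum_const, Finset.card_univ,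
        Fintype.card_fin, nsmul_eq_mul, hΩr, hΔr, hΘr, hΘc, trΩ, trΔ, trΘ]
      ring
    rw [hsum]
    ring
  -- put it together
  calc (∑ i : Fin v, ∑ i' : Fin v, ∑ j : Fin v, ∑ j' : Fin v,
      if i ≠ j ∧ i ≠ i' ∧ i' ≠ j' ∧ j ≠ j' then
        Ω i i + Ω i' i' - 2 * Ω i i' + Δ j j + Δ j' j' - 2 * Δ j j'
          + 2 * (Θ i j - Θ i j' - Θ i' j + Θ i' j')
      else 0)
    = ∑ i : Fin v, ∑ i' : Fin v, (if i ≠ i' then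
          (((v:ℝ)^2 - 3*(v:ℝ) + 3) * (Ω i i + Ω i' i' - 2 * Ω i i')
            + (2*(v:ℝ) - 2) * Δ.trace - ((v:ℝ) - 1) * (Δ i i + Δ i' i')
            - 2 * Δ i i'
            + (2*(v:ℝ) - 2) * (Θ i i' + Θ i' i - Θ i i - Θ i' i')) else 0) := by
        refine Finset.sum_congr rfl fun i _ => Finset.sum_congr rfl fun i' _ => ?_
        rw [Finset.sum_congr rfl fun j _ => stepA i i' j, ← stepB i i']
    _ = ∑ i : Fin v,
          (((v:ℝ)^2 - 3*(v:ℝ) + 3) * ((v:ℝ) * Ω i i + Ω.trace)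
          + (v:ℝ) * ((2*(v:ℝ) - 2) * Δ.trace - ((v:ℝ) - 1) * Δ i i)
          - ((v:ℝ) - 1) * Δ.trace
          - (2*(v:ℝ) - 2) * ((v:ℝ) * Θ i i + Θ.trace)
          - (2*(v:ℝ) - 2) * Δ.trace + 2 * (v:ℝ) * Δ i i) := by
        exact Finset.sum_congr rfl fun i _ => stepC i
    _ = 2 * (v : ℝ) * ((((v : ℝ) - 1) + ((v : ℝ) - 2) ^ 2) * (Ω.trace + Δ.trace)
      - 2 * ((v : ℝ) - 1) * Θ.trace) := by
        rw [Finset.sum_congr rfl (fun i _ => by ring :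
          ∀ i ∈ Finset.univ,
            (((v:ℝ)^2 - 3*(v:ℝ) + 3) * ((v:ℝ) * Ω i i + Ω.trace)
            + (v:ℝ) * ((2*(v:ℝ) - 2) * Δ.trace - ((v:ℝ) - 1) * Δ i i)
            - ((v:ℝ) - 1) * Δ.trace
            - (2*(v:ℝ) - 2) * ((v:ℝ) * Θ i i + Θ.trace)
            - (2*(v:ℝ) - 2) * Δ.trace + 2 * (v:ℝ) * Δ i i)
          = ((((v:ℝ)^2 - 3*(v:ℝ) + 3) * Ω.trace
              + (v:ℝ) * (2*(v:ℝ) - 2) * Δ.trace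
              - ((v:ℝ) - 1) * Δ.trace
              - (2*(v:ℝ) - 2) * Θ.trace - (2*(v:ℝ) - 2) * Δ.trace)
            + ((v:ℝ)^2 - 3*(v:ℝ) + 3) * (v:ℝ) * Ω i i
            - ((v:ℝ) * ((v:ℝ) - 1) - 2 * (v:ℝ)) * Δ i i
            - (2*(v:ℝ) - 2) * (v:ℝ) * Θ i i))]
        simp only [Finset.sum_add_distrib, Finset.sum_sub_distrib,
          ← Finset.mul_sum, Finset.sum_const, Finset.card_univ,
          Fintype.card_fin, nsmul_eq_mul, trΩ, trΔ, trΘ]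
        ring
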